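/- Let f₁₁, f₂₂, f₁₂ be real numbers with f₁₁ + f₂₂ = (α+β)L⁺, f₁₁ − f₂₂ = (α−β)L⁻, and f₁₂² = (α−β)²·a₁²·a₂², where L⁺ = m₁s₂ + s₁m₂, L⁻ = m₁s₂ − s₁m₂, all of m₁, m₂, s₁, s₂ ≥ 0, m₁s₁ ≥ a₁², m₂s₂ ≥ a₂², and α ≥ β > 0. Then the symmetric matrix [[f₁₁, f₁₂],[f₁₂, f₂₂]] is positive semidefinite. -/

import Mathlib

theorem curl_div_symbol_2D_posSemidef
    (m1 m2 s1 s2 a1 a2 α β f11 f22 f12 : ℝ)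
    (hm1 : 0 ≤ m1) (hm2 : 0 ≤ m2) (hs1 : 0 ≤ s1) (hs2 : 0 ≤ s2)
    (h1 : a1 ^ 2 ≤ m1 * s1) (h2 : a2 ^ 2 ≤ m2 * s2)
    (hαβ : β ≤ α) (hβ : 0 < β)
    (htr : f11 + f22 = (α + β) * (m1 * s2 + s1 * m2))
    (hdiff : f11 - f22 = (α - β) * (m1 * s2 - s1 * m2))
    (hoff : f12 ^ 2 = (α - β) ^ 2 * a1 ^ 2 * a2 ^ 2) :
    (Matrix.of !![f11, f12; f12, f22]).PosSemidef := by
  have hf11 : f11 = α * (m1 * s2) + β * (s1 * m2) := by linarith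
  have hf22 : f22 = β * (m1 * s2) + α * (s1 * m2) := by linarith
  have hA : 0 ≤ m1 * s2 := mul_nonneg hm1 hs2
  have hB : 0 ≤ s1 * m2 := mul_nonneg hs1 hm2
  have hα : 0 < α := lt_of_lt_of_le hβ hαβ
  have hf11' : 0 ≤ f11 := by rw [hf11]; positivity
  have hf22' : 0 ≤ f22 := by rw [hf22]; positivity
  have hdet : f12 ^ 2 ≤ f11 * f22 := by
    have ha1 : 0 ≤ a1 ^ 2 := sq_nonneg a1
    have ha2 : 0 ≤ a2 ^ 2 := sq_nonneg a2
    have hprod : a1 ^ 2 * a2 ^ 2 ≤ (m1 * s2) * (s1 * m2) := by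
      calc a1 ^ 2 * a2 ^ 2 ≤ (m1 * s1) * (m2 * s2) :=
            mul_le_mul h1 h2 ha2 (le_trans ha1 h1)
        _ = (m1 * s2) * (s1 * m2) := by ring
    nlinarith [sq_nonneg (α - β), sq_nonneg (m1 * s2 + s1 * m2), mul_pos hα hβ,
      sq_nonneg (m1 * s2 - s1 * m2)]
  refine Matrix.PosSemidef.of_dotProduct_mulVec_nonneg ?_ ?_
  · unfold Matrix.IsHermitian
    rw [show Matrix.of !![f11, f12; f12, f22] = !![f11, f12; f12, f22] from rfl]
    ext i j
    fin_cases i <;> fin_cases j <;> simp [Matrix.conjTranspose, Matrix.of_apply]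
  · intro x
    have hx : dotProduct (star x) ((Matrix.of !![f11, f12; f12, f22]).mulVec x) =
        f11 * (x 0) ^ 2 + 2 * f12 * (x 0 * x 1) + f22 * (x 1) ^ 2 := by
      rw [show Matrix.of !![f11, f12; f12, f22] = !![f11, f12; f12, f22] from rfl]
      simp [dotProduct, Matrix.mulVec, Fin.sum_univ_two]
      ring
    rw [hx]
    rcases eq_or_lt_of_le hf11' with h0 | h0
    · have hf12 : f12 = 0 := by nlinarith
      rw [← h0, hf12]
      nlinarith [sq_nonneg (x 1)]
    · have key : 0 ≤ (f11 * x 0 + f12 * x 1) ^ 2 + (f11 * f22 - f12 ^ 2) * x 1 ^ 2 := by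
        nlinarith [sq_nonneg (f11 * x 0 + f12 * x 1), sq_nonneg (x 1)]
      have heq : f11 * (f11 * x 0 ^ 2 + 2 * f12 * (x 0 * x 1) + f22 * x 1 ^ 2) =
          (f11 * x 0 + f12 * x 1) ^ 2 + (f11 * f22 - f12 ^ 2) * x 1 ^ 2 := by ring
      have h3 : 0 ≤ f11 * (f11 * x 0 ^ 2 + 2 * f12 * (x 0 * x 1) + f22 * x 1 ^ 2) := by
        rw [heq]; exact key
      exact nonneg_of_mul_nonneg_right h3 h0
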